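/- arXiv:1902.05701 — 2 statements merged into one kernel-verified Lean document; each statement's English description precedes it below -/
import Mathlib

section
/- Let G be a 2-connected graph that is not a cycle. Then G contains an induced cycle C with at least one bridge. -/
/-- A graph is 2-connected if it has at least 3 vertices and remains connected
after deleting any single vertex. -/
def TwoConnected {V : Type*} [Fintype V] (G : SimpleGraph V) : Prop :=
  3 ≤ Fintype.card V ∧ ∀ v : V, (G.induce {u | u ≠ v}).Connected

namespace InducedCycleBridgeAux

open SimpleGraph Walk

variable {V : Type*} {G : SimpleGraph V}

lemma aux_getVert_mem_support {u v : V} (p : G.Walk u v) {i : ℕ} (hi : i ≤ p.length) :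
    p.getVert i ∈ p.support := Walk.mem_support_iff_exists_getVert.mpr ⟨i, rfl, hi⟩

lemma aux_path_getVert_injOn {u v : V} {p : G.Walk u v} (hp : p.IsPath) :
    ∀ i ≤ p.length, ∀ j ≤ p.length, p.getVert i = p.getVert j → i = j := by
  induction p with
  | nil => simp
  | cons h q ih =>
    rw [Walk.cons_isPath_iff] at hp
    intro i hi j hj hij
    match i, j with
    | 0, 0 => rfl
    | 0, j+1 =>
      exfalso
      rw [Walk.getVert_zero, Walk.getVert_cons_succ] at hij
      exact hp.2 (hij ▸ aux_getVert_mem_support q (by simpa using hj))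
    | i+1, 0 =>
      exfalso
      rw [Walk.getVert_zero, Walk.getVert_cons_succ] at hij
      exact hp.2 (hij.symm ▸ aux_getVert_mem_support q (by simpa using hi))
    | i+1, j+1 =>
      rw [Walk.getVert_cons_succ, Walk.getVert_cons_succ] at hij
      have := ih hp.1 i (by simpa using hi) j (by simpa using hj) hij
      omega

lemma aux_cycle_getVert_injOn {x : V} {c : G.Walk x x} (hc : c.IsCycle) :
    ∀ i < c.length, ∀ j < c.length, c.getVert i = c.getVert j → i = j := by
  obtain ⟨u, hadj, q, rfl⟩ := Walk.not_nil_iff.mp hc.not_nil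
  have hq : q.IsPath := ((Walk.cons_isCycle_iff q hadj).mp hc).1
  intro i hi j hj hij
  rw [Walk.length_cons] at hi hj
  match i, j with
  | 0, 0 => rfl
  | 0, j+1 =>
    exfalso
    rw [Walk.getVert_zero, Walk.getVert_cons_succ] at hij
    have : j = q.length := by
      apply aux_path_getVert_injOn hq j (by omega) q.length le_rfl
      rw [Walk.getVert_length, ← hij]
    omega
  | i+1, 0 =>
    exfalso
    rw [Walk.getVert_zero, Walk.getVert_cons_succ] at hij
    have : i = q.length := by
      apply aux_path_getVert_injOn hq i (by omega) q.length le_rfl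
      rw [Walk.getVert_length, hij]
    omega
  | i+1, j+1 =>
    rw [Walk.getVert_cons_succ, Walk.getVert_cons_succ] at hij
    have := aux_path_getVert_injOn hq i (by omega) j (by omega) hij
    omega

lemma aux_fin_sub_val {n : ℕ} (hn : 3 ≤ n) (i j : Fin n) :
    (j - i).val = 1 ↔ (j.val = i.val + 1 ∨ (i.val = n - 1 ∧ j.val = 0)) := by
  have hi := i.isLt; have hj := j.isLt
  rw [Fin.sub_def]
  simp only
  rcases lt_or_ge (n - i.val + j.val) n with h | h
  · rw [Nat.mod_eq_of_lt h]; omega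
  · rw [Nat.mod_eq_sub_mod h, Nat.mod_eq_of_lt (by omega)]; omega

lemma aux_iso_of_spanning_induced {x : V} {c : G.Walk x x} (hc : c.IsCycle)
    (hind : c.toSubgraph.IsInduced) (hall : ∀ y : V, y ∈ c.support) :
    Nonempty (G ≃g SimpleGraph.cycleGraph c.length) := by
  set n := c.length with hn
  have hnc : n = c.length := rfl
  have hn3 : 3 ≤ n := hc.three_le_length
  set f : Fin n → V := fun i => c.getVert i.val with hf
  have hinj : Function.Injective f := by
    intro i j hij
    exact Fin.ext (aux_cycle_getVert_injOn hc i.val i.isLt j.val j.isLt hij)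
  have hsurj : Function.Surjective f := by
    intro y
    obtain ⟨k, hk, hkle⟩ := Walk.mem_support_iff_exists_getVert.mp (hall y)
    rcases eq_or_lt_of_le hkle with heq | hlt
    · refine ⟨⟨0, by omega⟩, ?_⟩
      show c.getVert 0 = y
      rw [← hk, heq, Walk.getVert_zero, Walk.getVert_length]
    · exact ⟨⟨k, hlt⟩, hk⟩
  have hmod : ∀ (k : ℕ) (j : Fin n), k < n → c.getVert (k + 1) = f j →
      j.val = (k + 1) % n := by
    intro k j hk hkj
    rcases lt_or_ge (k+1) n with h | h
    · rw [Nat.mod_eq_of_lt h]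
      have := aux_cycle_getVert_injOn hc (k+1) h j.val j.isLt hkj
      omega
    · have hkn : k + 1 = n := by omega
      have h0 : c.getVert (k+1) = c.getVert 0 := by
        rw [hkn, Walk.getVert_zero, hnc, Walk.getVert_length]
      rw [h0] at hkj
      have : (0:ℕ) = j.val := aux_cycle_getVert_injOn hc 0 (by omega) j.val j.isLt hkj
      rw [hkn, Nat.mod_self]
      omega
  have hmain : ∀ i j : Fin n, G.Adj (f i) (f j) ↔ (SimpleGraph.cycleGraph n).Adj i j := by
    intro i j
    rw [SimpleGraph.cycleGraph_adj']
    constructor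
    · intro hadj
      have hsub : c.toSubgraph.Adj (f i) (f j) := by
        apply hind _ _ hadj
        · rw [Walk.verts_toSubgraph]; exact hall _
        · rw [Walk.verts_toSubgraph]; exact hall _
      obtain ⟨k, hk, hkn⟩ := (Walk.toSubgraph_adj_iff _).mp hsub
      rw [Sym2.eq, Sym2.rel_iff'] at hk
      rcases hk with h1 | h1 <;>
        simp only [Prod.swap_prod_mk, Prod.mk.injEq] at h1
      · have hki : k = i.val := aux_cycle_getVert_injOn hc k hkn i.val i.isLt h1.1
        have hj' : j.val = (k + 1) % n := hmod k j hkn h1.2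
        right
        rw [aux_fin_sub_val hn3]
        rcases lt_or_ge (k+1) n with h | h
        · left; rw [hj', Nat.mod_eq_of_lt h, hki]
        · right
          have hkn' : k + 1 = n := by omega
          exact ⟨by omega, by rw [hj', hkn', Nat.mod_self]⟩
      · have hki : k = j.val := aux_cycle_getVert_injOn hc k hkn j.val j.isLt h1.1
        have hi' : i.val = (k + 1) % n := hmod k i hkn h1.2
        left
        rw [aux_fin_sub_val hn3]
        rcases lt_or_ge (k+1) n with h | h
        · left; rw [hi', Nat.mod_eq_of_lt h, hki]
        · right
          have hkn' : k + 1 = n := by omega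
          exact ⟨by omega, by rw [hi', hkn', Nat.mod_self]⟩
    · intro hadj
      have key : ∀ a b : Fin n, b.val = a.val + 1 ∨ (a.val = n - 1 ∧ b.val = 0) →
          G.Adj (f a) (f b) := by
        rintro a b (h | ⟨h1, h2⟩)
        · have hlt : a.val < c.length := by
            rw [← hnc]; have := b.isLt; omega
          have := c.adj_getVert_succ hlt
          show G.Adj (c.getVert a.val) (c.getVert b.val)
          rw [h]; exact this
        · have hlt : a.val < c.length := by rw [← hnc]; omega
          have hadj' := c.adj_getVert_succ hlt
          have h0 : c.getVert (a.val + 1) = c.getVert 0 := by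
            have : a.val + 1 = n := by omega
            rw [this, Walk.getVert_zero, hnc, Walk.getVert_length]
          rw [h0] at hadj'
          show G.Adj (c.getVert a.val) (c.getVert b.val)
          rw [h2]; exact hadj'
      rcases hadj with h | h
      · exact ((key j i ((aux_fin_sub_val hn3 j i).mp h)).symm)
      · exact key i j ((aux_fin_sub_val hn3 i j).mp h)
  set e : Fin n ≃ V := Equiv.ofBijective f ⟨hinj, hsurj⟩ with he
  refine ⟨⟨e.symm, ?_⟩⟩
  intro a b
  have ha : a = f (e.symm a) := (e.apply_symm_apply a).symm
  have hb : b = f (e.symm b) := (e.apply_symm_apply b).symm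
  constructor
  · intro h
    rw [ha, hb]
    exact (hmain _ _).mpr h
  · intro h
    exact (hmain _ _).mp (ha ▸ hb ▸ h)

lemma aux_end_mem_tail_support {b a : V} (w : G.Walk b a) (hba : b ≠ a) :
    a ∈ w.support.tail := by
  cases w with
  | nil => exact absurd rfl hba
  | cons h r => simpa using r.end_mem_support

lemma aux_edge_of_length_one {b a : V} (w : G.Walk b a) (hw : w.length = 1) :
    s(b, a) ∈ w.edges := by
  cases w with
  | nil => simp at hw
  | cons h r =>
    rename_i u
    rw [Walk.length_cons] at hw
    have h0 : u = a := Walk.eq_of_length_eq_zero (p := r) (by omega)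
    subst h0
    simp

lemma aux_shorter_of_chord [DecidableEq V] {x : V} {c : G.Walk x x} (hc : c.IsCycle)
    {a b : V}
    (ha : a ∈ c.support) (hb : b ∈ c.support) (hab : G.Adj a b)
    (hne : s(a, b) ∉ c.edges) :
    ∃ (y : V) (d : G.Walk y y), d.IsCycle ∧ d.length < c.length := by
  have hc' : (c.rotate a ha).IsCycle := hc.rotate ha
  set c' : G.Walk a a := c.rotate a ha with hc'def
  have hlen : c'.length = c.length := by
    rw [hc'def, Walk.rotate, Walk.length_append]
    conv_rhs => rw [← c.take_spec ha, Walk.length_append]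
    omega
  have hedges : ∀ e, e ∈ c'.edges ↔ e ∈ c.edges := fun e =>
    (Walk.rotate_edges c a ha).mem_iff
  have hne' : s(a, b) ∉ c'.edges := fun h => hne ((hedges _).mp h)
  have hb' : b ∈ c'.support := by
    have h1 : b ∈ c.support.tail := by
      cases c with
      | nil => exact absurd hc Walk.IsCycle.not_of_nil
      | cons h r =>
        simp only [Walk.support_cons, List.tail_cons]
        rcases (Walk.mem_support_iff _).mp hb with rfl | h2
        · exact r.end_mem_support
        · exact h2
    exact List.mem_of_mem_tail ((Walk.support_rotate c a ha).mem_iff.mpr h1)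
  obtain ⟨u, hadj, q, hq'⟩ := Walk.not_nil_iff.mp hc'.not_nil
  have hqc : (Walk.cons hadj q).IsCycle := hq' ▸ hc'
  have hq : q.IsPath := ((Walk.cons_isCycle_iff q hadj).mp hqc).1
  have hfirst : s(a, u) ∈ c'.edges := by rw [hq']; simp
  have hbq : b ∈ q.support := by
    rw [hq'] at hb'
    rcases (Walk.mem_support_iff _).mp hb' with rfl | h2
    · exact absurd rfl hab.ne
    · exact h2
  set p : G.Walk u b := q.takeUntil b hbq with hpdef
  have hp : p.IsPath := hq.takeUntil hbq
  have hspec : p.append (q.dropUntil b hbq) = q := q.take_spec hbq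
  have hanp : a ∉ p.support := by
    have hnd : q.support.Nodup := hq.support_nodup
    rw [← hspec, Walk.support_append, List.nodup_append] at hnd
    intro hmem
    exact hnd.2.2 a hmem a (aux_end_mem_tail_support _ hab.ne.symm) rfl
  have hP : (Walk.cons hadj p).IsPath := (Walk.cons_isPath_iff _ _).mpr ⟨hp, hanp⟩
  have hdrop2 : 2 ≤ (q.dropUntil b hbq).length := by
    by_contra hlt
    push_neg at hlt
    interval_cases hdl : (q.dropUntil b hbq).length
    · exact hab.ne.symm (Walk.eq_of_length_eq_zero (p := q.dropUntil b hbq) hdl)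
    · have h1 : s(b, a) ∈ (q.dropUntil b hbq).edges := aux_edge_of_length_one _ hdl
      have h2 : s(b, a) ∈ q.edges := q.edges_dropUntil_subset hbq h1
      have h3 : s(b, a) ∈ c'.edges := by rw [hq']; simp [h2]
      exact hne' (by rwa [Sym2.eq_swap] at h3)
  have hnotedge : s(b, a) ∉ (Walk.cons hadj p).edges := by
    rw [Walk.edges_cons]
    intro hmem
    rcases List.mem_cons.mp hmem with heq | hmem2
    · rw [Sym2.eq_swap] at heq
      exact hne' (heq ▸ hfirst)
    · have h2 : s(b, a) ∈ q.edges := q.edges_takeUntil_subset hbq hmem2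
      have h3 : s(b, a) ∈ c'.edges := by rw [hq']; simp [h2]
      exact hne' (by rwa [Sym2.eq_swap] at h3)
  refine ⟨b, Walk.cons hab.symm (Walk.cons hadj p), ?_, ?_⟩
  · exact (Walk.cons_isCycle_iff _ _).mpr ⟨hP, hnotedge⟩
  · have h1 : p.length + (q.dropUntil b hbq).length = q.length := by
      rw [← Walk.length_append, hspec]
    have h2 : c'.length = q.length + 1 := by rw [hq']; simp
    rw [← hlen, h2]
    simp only [Walk.length_cons]
    omega

lemma aux_exists_third [Fintype V] (h3 : 3 ≤ Fintype.card V) (u v : V) :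
    ∃ w : V, w ≠ u ∧ w ≠ v := by
  classical
  by_contra hcon
  push_neg at hcon
  have hsub : (Finset.univ : Finset V) ⊆ {u, v} := by
    intro w _
    rcases em (w = u) with rfl | hw
    · simp
    · simp [hcon w hw]
  have := Finset.card_le_card hsub
  simp only [Finset.card_univ] at this
  have : Fintype.card V ≤ 2 := this.trans (Finset.card_insert_le _ _ |>.trans (by simp))
  omega

lemma aux_connected [Fintype V] (h2 : TwoConnected G) : G.Connected := by
  obtain ⟨hcard, hconn⟩ := h2
  have hne : Nonempty V := Fintype.card_pos_iff.mp (by omega)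
  haveI := hne
  have hpre : G.Preconnected := by
    intro u v
    rcases em (u = v) with rfl | huv
    · exact SimpleGraph.Reachable.refl u
    obtain ⟨w, hwu, hwv⟩ := aux_exists_third hcard u v
    have hreach := (hconn w).preconnected ⟨u, hwu.symm⟩ ⟨v, hwv.symm⟩
    exact hreach.map (SimpleGraph.Embedding.induce {x : V | x ≠ w}).toHom
  exact ⟨hpre⟩

lemma aux_exists_neighbor (hconn : G.Connected) {v y : V} (hvy : v ≠ y) :
    ∃ a, G.Adj v a := by
  obtain ⟨p⟩ := hconn.preconnected v y
  have hnn : ¬ p.Nil := by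
    intro h
    exact hvy (Walk.eq_of_length_eq_zero (Walk.nil_iff_length_eq.mp h))
  exact ⟨p.getVert 1, p.adj_snd hnn⟩

lemma aux_two_neighbors [Fintype V] (h2 : TwoConnected G) (v : V) :
    ∃ a b, G.Adj v a ∧ G.Adj v b ∧ a ≠ b := by
  obtain ⟨hcard, hconn⟩ := h2
  have hGc := aux_connected ⟨hcard, hconn⟩
  obtain ⟨y, hy, _⟩ := aux_exists_third hcard v v
  obtain ⟨a, ha⟩ := aux_exists_neighbor hGc (fun h => hy h.symm)
  obtain ⟨z, hza, hzv⟩ := aux_exists_third hcard a v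
  have hc' := hconn a
  have hva : v ≠ a := ha.ne
  have hreach := hc'.preconnected ⟨v, hva⟩ ⟨z, hza⟩
  obtain ⟨p⟩ := hreach
  have hnn : ¬ p.Nil := by
    intro h
    have := Walk.eq_of_length_eq_zero (Walk.nil_iff_length_eq.mp h)
    exact hzv (congrArg Subtype.val this).symm
  have hadj := p.adj_snd hnn
  set b := p.getVert 1 with hb
  refine ⟨a, b.val, ha, ?_, fun h => b.prop h.symm⟩
  · have : G.Adj v b.val := by
      have := hadj
      rw [SimpleGraph.comap_adj] at this
      exact this
    exact this

lemma aux_exists_cycle [Fintype V] (h2 : TwoConnected G) :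
    ∃ (v : V) (c : G.Walk v v), c.IsCycle := by
  classical
  by_contra hcon
  push_neg at hcon
  have hac : G.IsAcyclic := fun v c hc => hcon v c hc
  have htree : G.IsTree := ⟨aux_connected h2, hac⟩
  have hcard := htree.card_edgeFinset
  have hdeg : ∀ v : V, 2 ≤ G.degree v := by
    intro v
    obtain ⟨a, b, ha, hb, hab⟩ := aux_two_neighbors h2 v
    have h1 : 1 < (G.neighborFinset v).card :=
      Finset.one_lt_card.mpr ⟨a, by simpa using ha, b, by simpa using hb, fun h => hab h⟩
    rw [SimpleGraph.degree]
    exact h1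
  have hsum := SimpleGraph.sum_degrees_eq_twice_card_edges G
  have hle : Finset.univ.card • 2 ≤ ∑ v, G.degree v :=
    Finset.card_nsmul_le_sum Finset.univ _ 2 (fun v _ => hdeg v)
  rw [smul_eq_mul, Finset.card_univ] at hle
  have h3 := h2.1
  omega

end InducedCycleBridgeAux

open InducedCycleBridgeAux SimpleGraph in
/-- Every 2-connected graph that is not a cycle contains an induced cycle `C`
having at least one bridge (i.e. a chord of `C` or a connected component of
`G − V(C)`; since `C` is induced, a bridge exists iff there is a chord or a
vertex outside `C`). -/
theorem induced_cycle_with_bridge {V : Type*} [Fintype V] [DecidableEq V]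
    (G : SimpleGraph V)
    (h2 : TwoConnected G)
    (hnc : ¬ ∃ n : ℕ, 3 ≤ n ∧ Nonempty (G ≃g SimpleGraph.cycleGraph n)) :
    ∃ (v : V) (c : G.Walk v v), c.IsCycle ∧ c.toSubgraph.IsInduced ∧
      ((∃ a b : V, a ∈ c.support ∧ b ∈ c.support ∧ G.Adj a b ∧
          ¬ c.toSubgraph.Adj a b) ∨
        ∃ x : V, x ∉ c.support) := by
  classical
  have hexist : ∃ m : ℕ, ∃ (v : V) (c : G.Walk v v), c.IsCycle ∧ c.length = m := by
    obtain ⟨v, c, hc⟩ := aux_exists_cycle h2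
    exact ⟨c.length, v, c, hc, rfl⟩
  obtain ⟨v, c, hc, hlen⟩ := Nat.find_spec hexist
  have hmin : ∀ m < Nat.find hexist, ¬ ∃ (v : V) (c : G.Walk v v), c.IsCycle ∧ c.length = m :=
    fun m hm => Nat.find_min hexist hm
  have hind : c.toSubgraph.IsInduced := by
    intro a ha b hb hadj
    by_contra hnadj
    have hne : s(a, b) ∉ c.edges := by
      intro hmem
      exact hnadj ((SimpleGraph.Subgraph.mem_edgeSet).mp
        ((Walk.mem_edges_toSubgraph c).mpr hmem))
    rw [Walk.verts_toSubgraph] at ha hb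
    obtain ⟨y, d, hd, hdlen⟩ := aux_shorter_of_chord hc ha hb hadj hne
    exact hmin d.length (by omega) ⟨y, d, hd, rfl⟩
  by_cases hall : ∀ x : V, x ∈ c.support
  · exfalso
    exact hnc ⟨c.length, hc.three_le_length, aux_iso_of_spanning_induced hc hind hall⟩
  · push_neg at hall
    exact ⟨v, c, hc, hind, Or.inr hall⟩
end

section
/- Let C be a cycle of even length 2s in a graph G, let A ⊆ V(C), and suppose that for no index i both u_i ∈ A and u_{i+s+1} ∈ A (indices modulo 2s). If |A| = s, then no two consecutive vertices of C lie in A; consequently the vertices of C alternate between A and V(C)∖A. -/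
/-- Let the vertices of a cycle of even length `2s` be indexed by `ZMod (2s)`,
and let `A` be a set of vertices containing no near-antipodal pair
`{u_i, u_{i+s+1}}`. If `|A| = s`, then no two consecutive vertices lie in `A`;
consequently the vertices alternate between `A` and its complement. -/
theorem alternating_of_no_near_antipodal (s : ℕ) (hs : 0 < s)
    (A : Finset (ZMod (2 * s)))
    (hA : ∀ i : ZMod (2 * s), ¬ (i ∈ A ∧ i + (s : ZMod (2 * s)) + 1 ∈ A))
    (hcard : A.card = s) :
    (∀ i : ZMod (2 * s), ¬ (i ∈ A ∧ i + 1 ∈ A)) ∧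
    (∀ i : ZMod (2 * s), i ∈ A ↔ i + 1 ∉ A) := by
  haveI : NeZero (2 * s) := ⟨by omega⟩
  set c : ZMod (2 * s) := (s : ZMod (2 * s)) + 1 with hc
  have hself : ((2 * s : ℕ) : ZMod (2 * s)) = 0 := ZMod.natCast_self _
  have h2c : c + c = 2 := by
    push_cast at hself
    rw [hc]
    linear_combination hself
  -- the shift of A by c equals the complement of A
  have hB : A.image (· + c) = Aᶜ := by
    apply Finset.eq_of_subset_of_card_le
    · intro x hx
      simp only [Finset.mem_image] at hx
      obtain ⟨a, ha, rfl⟩ := hx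
      simp only [Finset.mem_compl]
      intro hc'
      exact hA a ⟨ha, by rw [hc] at hc'; rw [← add_assoc] at hc'; exact hc'⟩
    · rw [Finset.card_compl, Finset.card_image_of_injective _ (add_left_injective c),
        hcard, ZMod.card]
      omega
  have hK : ∀ j : ZMod (2 * s), j ∉ A ↔ j - c ∈ A := by
    intro j
    constructor
    · intro hj
      have : j ∈ Aᶜ := Finset.mem_compl.mpr hj
      rw [← hB, Finset.mem_image] at this
      obtain ⟨a, ha, rfl⟩ := this
      simpa using ha
    · intro h hj
      apply hA (j - c)
      refine ⟨h, ?_⟩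
      have : j - c + (s : ZMod (2 * s)) + 1 = j := by rw [hc]; ring
      rw [this]; exact hj
  -- A is invariant under subtracting 2
  have inv2 : ∀ j : ZMod (2 * s), j ∈ A ↔ j - 2 ∈ A := by
    intro j
    have h1 := hK j
    have h2 := hK (j - c)
    have e : j - c - c = j - 2 := by linear_combination -h2c
    rw [e] at h2
    constructor
    · intro h
      exact h2.mp (fun hcon => (h1.mpr hcon) h)
    · intro h
      by_contra hj
      exact h2.mpr h (h1.mp hj)
  have inv2' : ∀ j : ZMod (2 * s), j ∈ A → j + 2 ∈ A := by
    intro j h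
    have := (inv2 (j + 2)).mpr
    simp only [add_sub_cancel_right] at this
    exact this h
  have step : ∀ (k : ℕ) (j : ZMod (2 * s)), j ∈ A → j + 2 * k ∈ A := by
    intro k
    induction k with
    | zero => intro j h; simpa using h
    | succ n ih =>
      intro j h
      have := inv2' _ (ih j h)
      convert this using 1
      push_cast
      ring
  have part1 : ∀ i : ZMod (2 * s), ¬ (i ∈ A ∧ i + 1 ∈ A) := by
    rintro i ⟨h0, h1⟩
    have hall : ∀ j : ZMod (2 * s), j ∈ A := by
      intro j
      have hn : j = i + ((j - i).val : ZMod (2 * s)) := by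
        rw [ZMod.natCast_val, ZMod.cast_id]; ring
      rcases Nat.even_or_odd (j - i).val with ⟨m, hm⟩ | ⟨m, hm⟩
      · have := step m i h0
        rw [hn, hm]
        convert this using 2
        push_cast; ring
      · have := step m (i + 1) h1
        rw [hn, hm]
        convert this using 1
        push_cast; ring
    have hA' : A = Finset.univ := Finset.eq_univ_of_forall hall
    rw [hA', Finset.card_univ, ZMod.card] at hcard
    omega
  refine ⟨part1, fun i => ⟨fun h hcon => part1 i ⟨h, hcon⟩, fun h => ?_⟩⟩
  have h1 : i + 1 - c ∈ A := (hK _).1 h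
  by_contra hi
  have h2 : i - c ∈ A := (hK _).1 hi
  refine part1 (i - c) ⟨h2, ?_⟩
  convert h1 using 1
  ring
end
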